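/- Every Backward Rewarding Mechanism M[f₁,…,fₙ] is merit-based: (Normality) a creator with score 0 receives reward 0, and a single creator with score 1 against all-zero competitors receives ∫₀¹ f₁(t) dt > 0; (Fairness) for nonincreasing scores 1 ≥ σ₁ ≥ ⋯ ≥ σₙ ≥ 0 and i < j, the reward of the i-th ranked creator minus that of the j-th ranked creator equals Σ_{k=i}^{j−1} ∫_{σ_{k+1}}^{σ_k} f_k(t) dt ≥ 0; (Negative externality) if the scores of the creators other than i are componentwise weakly increased while σᵢ is unchanged, creator i's reward weakly decreases. -/

import Mathlib

open MeasureTheory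

/-- A score vector is "sorted" if it is nonincreasing and takes values in `[0,1]`. -/
def SortedScores (n : ℕ) (σ : Fin n → ℝ) : Prop :=
  (∀ i j : Fin n, i ≤ j → σ j ≤ σ i) ∧ ∀ i, σ i ∈ Set.Icc (0:ℝ) 1

/-- The sorted score vector consisting of `k` ones followed by zeros. -/
def onesVec (n k : ℕ) : Fin n → ℝ := fun i => if (i : ℕ) < k then 1 else 0

/-- The defining hypotheses on the family `f₁, …, fₙ` of a Backward Rewarding
Mechanism: each `f k` is integrable on `[0,1]`, nonnegative on `[0,1]`,
pointwise nonincreasing in the index `k`, and `f₁ > 0` on `[0,1]`. -/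
def BRMHyp {n : ℕ} (f : Fin n → ℝ → ℝ) : Prop :=
  (∀ k, IntervalIntegrable (f k) volume 0 1) ∧
  (∀ k, ∀ t ∈ Set.Icc (0:ℝ) 1, 0 ≤ f k t) ∧
  (∀ k k' : Fin n, k ≤ k' → ∀ t ∈ Set.Icc (0:ℝ) 1, f k' t ≤ f k t) ∧
  (∀ k : Fin n, (k : ℕ) = 0 → ∀ t ∈ Set.Icc (0:ℝ) 1, 0 < f k t)

/-- `σ_{k+1}`, with the convention `σ_{n+1} = 0`. -/
def nextVal {n : ℕ} (σ : Fin n → ℝ) (k : Fin n) : ℝ :=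
  if h : (k : ℕ) + 1 < n then σ ⟨(k : ℕ) + 1, h⟩ else 0

/-- The BRM reward of the creator at (0-indexed) rank `p` of the nonincreasing score
vector `σ`: `∑_{k ≥ p} ∫_{σ_{k+1}}^{σ_k} f_k(t) dt`. -/
noncomputable def brmRankedN {n : ℕ} (f : Fin n → ℝ → ℝ) (σ : Fin n → ℝ) (p : ℕ) : ℝ :=
  ∑ k : Fin n, if p ≤ (k : ℕ) then ∫ t in (nextVal σ k)..(σ k), f k t else 0

/-- The BRM reward of the creator holding the `i`-th largest score of the
nonincreasing score vector `σ` (0-indexed). -/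
noncomputable def brmRanked {n : ℕ} (f : Fin n → ℝ → ℝ) (σ : Fin n → ℝ) (i : Fin n) : ℝ :=
  brmRankedN f σ (i : ℕ)

/-- The nonincreasing rearrangement of an arbitrary score vector:
`sortDesc σ k` is the `k`-th largest entry of `σ` (0-indexed). -/
noncomputable def sortDesc {n : ℕ} (σ : Fin n → ℝ) : Fin n → ℝ :=
  fun k => σ (Tuple.sort σ k.rev)

/-- The (0-indexed) rank of creator `i` in the score vector `σ`, ties broken by index. -/
noncomputable def rankCount {n : ℕ} (σ : Fin n → ℝ) (i : Fin n) : ℕ :=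
  (Finset.univ.filter fun j => σ i < σ j ∨ (σ i = σ j ∧ j < i)).card

/-- Creator `i`'s BRM reward on an arbitrary score vector `σ ∈ [0,1]ⁿ`. -/
noncomputable def brmRewardAt {n : ℕ} (f : Fin n → ℝ → ℝ) (σ : Fin n → ℝ) (i : Fin n) : ℝ :=
  brmRankedN f (sortDesc σ) (rankCount σ i)

/-- The BRM potential `Φ(σ) = ∑_k ∫₀^{σ_(k)} f_k(t) dt`. -/
noncomputable def brmPotential {n : ℕ} (f : Fin n → ℝ → ℝ) (σ : Fin n → ℝ) : ℝ :=
  ∑ k : Fin n, ∫ t in (0:ℝ)..(sortDesc σ k), f k t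
namespace Stmt6Aux

variable {n : ℕ}

/-! ### basic integral helpers -/

lemma integrable_sub (g : ℝ → ℝ) (hg : IntervalIntegrable g volume 0 1)
    {a b : ℝ} (ha : a ∈ Set.Icc (0:ℝ) 1) (hb : b ∈ Set.Icc (0:ℝ) 1) :
    IntervalIntegrable g volume a b := by
  refine hg.mono_set (Set.uIcc_subset_uIcc ?_ ?_) <;>
    rw [Set.uIcc_of_le (by norm_num : (0:ℝ) ≤ 1)] <;> assumption

lemma int_nonneg (g : ℝ → ℝ) (hpos : ∀ t ∈ Set.Icc (0:ℝ) 1, 0 ≤ g t)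
    {a b : ℝ} (ha : a ∈ Set.Icc (0:ℝ) 1) (hb : b ∈ Set.Icc (0:ℝ) 1) (hab : a ≤ b) :
    0 ≤ ∫ t in a..b, g t :=
  intervalIntegral.integral_nonneg hab
    (fun u hu => hpos u ⟨le_trans ha.1 hu.1, le_trans hu.2 hb.2⟩)

lemma int_split (g : ℝ → ℝ) (hg : IntervalIntegrable g volume 0 1)
    {a b : ℝ} (ha : a ∈ Set.Icc (0:ℝ) 1) (hb : b ∈ Set.Icc (0:ℝ) 1) :
    ∫ t in a..b, g t = (∫ t in (0:ℝ)..b, g t) - ∫ t in (0:ℝ)..a, g t := by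
  have h0 : (0:ℝ) ∈ Set.Icc (0:ℝ) 1 := by norm_num
  exact (intervalIntegral.integral_interval_sub_left
    (integrable_sub g hg h0 hb) (integrable_sub g hg h0 ha)).symm

/-! ### lower sets in `Fin n` -/

lemma mem_iff_lt_card_of_lower (S : Finset (Fin n))
    (hS : ∀ a b : Fin n, a ≤ b → b ∈ S → a ∈ S) (k : Fin n) :
    k ∈ S ↔ (k : ℕ) < S.card := by
  constructor
  · intro hk
    have h1 : Finset.Iic k ⊆ S := fun a ha => hS a k (Finset.mem_Iic.1 ha) hk
    have h2 := Finset.card_le_card h1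
    rw [Fin.card_Iic] at h2
    omega
  · intro hk
    by_contra hk'
    have h2 : S ⊆ Finset.Iio k := by
      intro b hb
      rw [Finset.mem_Iio]
      by_contra hbk
      exact hk' (hS k b (le_of_not_gt hbk) hb)
    have h3 := Finset.card_le_card h2
    rw [Fin.card_Iio] at h3
    omega

/-! ### sortDesc facts -/

lemma sortDesc_antitone (σ : Fin n → ℝ) {j k : Fin n} (hjk : j ≤ k) :
    sortDesc σ k ≤ sortDesc σ j :=
  Tuple.monotone_sort σ (Fin.rev_le_rev.2 hjk)

lemma sortDesc_mem (σ : Fin n → ℝ) (hσ : ∀ j, σ j ∈ Set.Icc (0:ℝ) 1) (k : Fin n) :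
    sortDesc σ k ∈ Set.Icc (0:ℝ) 1 := hσ _

lemma card_filter_sortDesc (σ : Fin n → ℝ) (P : ℝ → Prop) [DecidablePred P] :
    (Finset.univ.filter fun k => P (sortDesc σ k)).card
      = (Finset.univ.filter fun j => P (σ j)).card := by
  refine Finset.card_equiv (Fin.revPerm.trans (Tuple.sort σ)) fun k => ?_
  rw [Finset.mem_filter, Finset.mem_filter]
  simp [sortDesc]

lemma lt_card_le_iff (σ : Fin n → ℝ) (t : ℝ) (q : Fin n) :
    (q:ℕ) < (Finset.univ.filter fun j => t ≤ σ j).card ↔ t ≤ sortDesc σ q := by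
  rw [← card_filter_sortDesc σ (fun x => t ≤ x)]
  rw [← mem_iff_lt_card_of_lower _ (fun a b hab hb => by
    simp only [Finset.mem_filter, Finset.mem_univ, true_and] at hb ⊢
    exact le_trans hb (sortDesc_antitone σ hab)) q]
  simp

lemma lt_card_lt_iff (σ : Fin n → ℝ) (t : ℝ) (q : Fin n) :
    (q:ℕ) < (Finset.univ.filter fun j => t < σ j).card ↔ t < sortDesc σ q := by
  rw [← card_filter_sortDesc σ (fun x => t < x)]
  rw [← mem_iff_lt_card_of_lower _ (fun a b hab hb => by
    simp only [Finset.mem_filter, Finset.mem_univ, true_and] at hb ⊢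
    exact lt_of_lt_of_le hb (sortDesc_antitone σ hab)) q]
  simp

lemma rankCount_lt (σ : Fin n → ℝ) (i : Fin n) : rankCount σ i < n := by
  have hni : i ∉ Finset.univ.filter fun j => σ i < σ j ∨ (σ i = σ j ∧ j < i) := by simp
  have h : (Finset.univ.filter fun j => σ i < σ j ∨ (σ i = σ j ∧ j < i)) ⊂ Finset.univ :=
    (Finset.ssubset_iff_of_subset (Finset.subset_univ _)).2 ⟨i, Finset.mem_univ i, hni⟩
  have := Finset.card_lt_card h
  simpa [rankCount] using this

lemma sortDesc_rankCount (σ : Fin n → ℝ) (i : Fin n) :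
    sortDesc σ ⟨rankCount σ i, rankCount_lt σ i⟩ = σ i := by
  set q : Fin n := ⟨rankCount σ i, rankCount_lt σ i⟩ with hq
  have hni : i ∉ Finset.univ.filter fun j => σ i < σ j ∨ (σ i = σ j ∧ j < i) := by simp
  have h1 : σ i ≤ sortDesc σ q := by
    rw [← lt_card_le_iff]
    have hsub : insert i (Finset.univ.filter fun j => σ i < σ j ∨ (σ i = σ j ∧ j < i))
        ⊆ Finset.univ.filter fun j => σ i ≤ σ j := by
      intro j hj
      rcases Finset.mem_insert.1 hj with rfl | hj'
      · simp
      · simp only [Finset.mem_filter, Finset.mem_univ, true_and] at hj' ⊢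
        rcases hj' with h | ⟨h, _⟩
        · exact le_of_lt h
        · exact le_of_eq h
    have := Finset.card_le_card hsub
    rw [Finset.card_insert_of_notMem hni] at this
    show rankCount σ i < _
    rw [rankCount]
    omega
  have h2 : ¬ (σ i < sortDesc σ q) := by
    rw [← lt_card_lt_iff]
    have hsub : (Finset.univ.filter fun j => σ i < σ j)
        ⊆ Finset.univ.filter fun j => σ i < σ j ∨ (σ i = σ j ∧ j < i) := by
      intro j hj
      simp only [Finset.mem_filter, Finset.mem_univ, true_and] at hj ⊢
      exact Or.inl hj
    have := Finset.card_le_card hsub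
    show ¬ (rankCount σ i < _)
    rw [rankCount]
    omega
  exact le_antisymm (le_of_not_gt h2) h1

lemma sortDesc_mono {σ σ' : Fin n → ℝ} (h : ∀ j, σ j ≤ σ' j) (q : Fin n) :
    sortDesc σ q ≤ sortDesc σ' q := by
  rw [← lt_card_le_iff]
  have h1 : (q:ℕ) < (Finset.univ.filter fun j => sortDesc σ q ≤ σ j).card :=
    (lt_card_le_iff σ _ q).2 le_rfl
  refine lt_of_lt_of_le h1 (Finset.card_le_card ?_)
  intro j hj
  simp only [Finset.mem_filter, Finset.mem_univ, true_and] at hj ⊢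
  exact le_trans hj (h j)

lemma rankCount_mono (σ σ' : Fin n → ℝ) (i : Fin n) (hii : σ' i = σ i)
    (h : ∀ j, σ j ≤ σ' j) : rankCount σ i ≤ rankCount σ' i := by
  apply Finset.card_le_card
  intro j hj
  simp only [Finset.mem_filter, Finset.mem_univ, true_and] at hj ⊢
  rcases hj with h1 | ⟨h2, h3⟩
  · exact Or.inl (by rw [hii]; exact lt_of_lt_of_le h1 (h j))
  · have h4 : σ' i ≤ σ' j := by rw [hii, h2]; exact h j
    rcases h4.lt_or_eq with h5 | h5
    · exact Or.inl h5
    · exact Or.inr ⟨h5, h3⟩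

/-! ### ℕ-indexed reward machinery -/

noncomputable def tv (τ : Fin n → ℝ) (m : ℕ) : ℝ := if h : m < n then τ ⟨m, h⟩ else 0

noncomputable def Gm (f : Fin n → ℝ → ℝ) (m : ℕ) (x : ℝ) : ℝ :=
  if h : m < n then ∫ t in (0:ℝ)..x, f ⟨m, h⟩ t else 0

noncomputable def Im (f : Fin n → ℝ → ℝ) (τ : Fin n → ℝ) (m : ℕ) : ℝ :=
  if h : m < n then ∫ t in (tv τ (m+1))..(τ ⟨m, h⟩), f ⟨m, h⟩ t else 0

lemma tv_mem (τ : Fin n → ℝ) (hτ : ∀ k, τ k ∈ Set.Icc (0:ℝ) 1) (m : ℕ) :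
    tv τ m ∈ Set.Icc (0:ℝ) 1 := by
  rw [tv]; split
  · exact hτ _
  · norm_num

lemma Gm_zero (f : Fin n → ℝ → ℝ) (m : ℕ) : Gm f m 0 = 0 := by
  rw [Gm]; split <;> simp

lemma Gm_sub (f : Fin n → ℝ → ℝ) (hf : BRMHyp f) {m : ℕ} (h : m < n)
    {x y : ℝ} (hx : x ∈ Set.Icc (0:ℝ) 1) (hy : y ∈ Set.Icc (0:ℝ) 1) :
    ∫ t in x..y, f ⟨m, h⟩ t = Gm f m y - Gm f m x := by
  rw [Gm, Gm, dif_pos h, dif_pos h]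
  exact int_split _ (hf.1 _) hx hy

lemma brm_range (f : Fin n → ℝ → ℝ) (τ : Fin n → ℝ) (p : ℕ) :
    brmRankedN f τ p = ∑ m ∈ Finset.range n, if p ≤ m then Im f τ m else 0 := by
  rw [brmRankedN, ← Fin.sum_univ_eq_sum_range (fun m => if p ≤ m then Im f τ m else 0) n]
  refine Finset.sum_congr rfl fun k _ => ?_
  by_cases h : p ≤ (k:ℕ) <;> simp [h, Im, k.isLt, tv, nextVal]

lemma range_split (A : ℕ → ℝ) (p : ℕ) (hp : p < n) :
    ∑ m ∈ Finset.range n, (if p ≤ m then A m else 0)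
      = A p + ∑ m ∈ Finset.range n, (if p + 1 ≤ m then A m else 0) := by
  have h1 : ∀ m, (if p ≤ m then A m else 0)
      = (if m = p then A m else 0) + (if p + 1 ≤ m then A m else 0) := by
    intro m; split_ifs <;> first | omega | ring
  rw [Finset.sum_congr rfl fun m _ => h1 m, Finset.sum_add_distrib,
    Finset.sum_ite_eq' (Finset.range n) p A, if_pos (Finset.mem_range.2 hp)]

lemma brm_formula (f : Fin n → ℝ → ℝ) (hf : BRMHyp f) (τ : Fin n → ℝ)
    (hτr : ∀ k, τ k ∈ Set.Icc (0:ℝ) 1) :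
    ∀ N p, n - p ≤ N →
      brmRankedN f τ p = Gm f p (tv τ p)
        - ∑ m ∈ Finset.range n,
            (if p < m then Gm f (m-1) (tv τ m) - Gm f m (tv τ m) else 0) := by
  intro N
  induction N with
  | zero =>
      intro p hp
      have h1 : brmRankedN f τ p = 0 := by
        rw [brm_range]
        exact Finset.sum_eq_zero fun m hm =>
          if_neg (by rw [Finset.mem_range] at hm; omega)
      have h2 : ∑ m ∈ Finset.range n,
          (if p < m then Gm f (m-1) (tv τ m) - Gm f m (tv τ m) else 0) = 0 :=
        Finset.sum_eq_zero fun m hm => if_neg (by rw [Finset.mem_range] at hm; omega)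
      rw [h1, h2, Gm, dif_neg (by omega)]
      ring
  | succ N ih =>
      intro p hp
      by_cases hpn : p < n
      · rw [brm_range, range_split (Im f τ) p hpn, ← brm_range, ih (p+1) (by omega)]
        have htv : tv τ p = τ ⟨p, hpn⟩ := dif_pos hpn
        by_cases hp1 : p + 1 < n
        · have hsplit : ∑ m ∈ Finset.range n,
              (if p < m then Gm f (m-1) (tv τ m) - Gm f m (tv τ m) else 0)
              = (Gm f p (tv τ (p+1)) - Gm f (p+1) (tv τ (p+1)))
                + ∑ m ∈ Finset.range n,
                  (if p + 1 < m then Gm f (m-1) (tv τ m) - Gm f m (tv τ m) else 0) := by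
            have h1 : ∀ m, (if p < m then Gm f (m-1) (tv τ m) - Gm f m (tv τ m) else 0)
                = (if m = p+1 then Gm f (m-1) (tv τ m) - Gm f m (tv τ m) else 0)
                  + (if p + 1 < m then Gm f (m-1) (tv τ m) - Gm f m (tv τ m) else 0) := by
              intro m; split_ifs <;> first | omega | ring
            rw [Finset.sum_congr rfl fun m _ => h1 m, Finset.sum_add_distrib,
              Finset.sum_ite_eq' (Finset.range n) (p+1)
                (fun m => Gm f (m-1) (tv τ m) - Gm f m (tv τ m)),
              if_pos (Finset.mem_range.2 hp1)]
            simp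
          rw [hsplit]
          have hIm : Im f τ p = Gm f p (tv τ p) - Gm f p (tv τ (p+1)) := by
            rw [Im, dif_pos hpn, Gm_sub f hf hpn (tv_mem τ hτr (p+1)) (hτr _), htv]
          rw [hIm]
          ring
        · have hIm : Im f τ p = Gm f p (tv τ p) := by
            rw [Im, dif_pos hpn, tv, dif_neg (by omega),
              Gm_sub f hf hpn (by norm_num) (hτr _), htv, Gm_zero]
            ring
          have hz2 : ∑ m ∈ Finset.range n,
              (if p + 1 < m then Gm f (m-1) (tv τ m) - Gm f m (tv τ m) else 0) = 0 :=
            Finset.sum_eq_zero fun m hm =>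
              if_neg (by rw [Finset.mem_range] at hm; omega)
          have hz3 : ∑ m ∈ Finset.range n,
              (if p < m then Gm f (m-1) (tv τ m) - Gm f m (tv τ m) else 0) = 0 :=
            Finset.sum_eq_zero fun m hm =>
              if_neg (by rw [Finset.mem_range] at hm; omega)
          have hz4 : Gm f (p+1) (tv τ (p+1)) = 0 := by rw [Gm, dif_neg (by omega)]
          rw [hIm, hz2, hz3, hz4]
          ring
      · have h1 : brmRankedN f τ p = 0 := by
          rw [brm_range]
          exact Finset.sum_eq_zero fun m hm =>
            if_neg (by rw [Finset.mem_range] at hm; omega)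
        have h2 : ∑ m ∈ Finset.range n,
            (if p < m then Gm f (m-1) (tv τ m) - Gm f m (tv τ m) else 0) = 0 :=
          Finset.sum_eq_zero fun m hm => if_neg (by rw [Finset.mem_range] at hm; omega)
        rw [h1, h2, Gm, dif_neg (by omega)]
        ring

lemma telesc (F : ℕ → ℝ) (p : ℕ) : ∀ p', p ≤ p' →
    ∑ m ∈ Finset.Ioc p p', (F (m-1) - F m) = F p - F p' := by
  intro p'
  induction p' with
  | zero =>
      intro h
      have : p = 0 := by omega
      subst this; simp
  | succ q ihq =>
      intro h
      rcases Nat.lt_or_ge p (q+1) with h1 | h2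
      · have hpq : p ≤ q := by omega
        rw [Finset.sum_Ioc_succ_top hpq, ihq hpq]
        simp only [Nat.add_sub_cancel]
        ring
      · have : p = q + 1 := by omega
        subst this; simp

lemma G_sub_telescope (f : Fin n → ℝ → ℝ) (x : ℝ) (p p' : ℕ) (hpp' : p ≤ p') (hp' : p' < n) :
    ∑ m ∈ Finset.range n, (if p < m ∧ m ≤ p' then Gm f (m-1) x - Gm f m x else 0)
      = Gm f p x - Gm f p' x := by
  have hfil : Finset.filter (fun m => p < m ∧ m ≤ p') (Finset.range n) = Finset.Ioc p p' := by
    ext m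
    simp only [Finset.mem_filter, Finset.mem_range, Finset.mem_Ioc]
    omega
  rw [← Finset.sum_filter, hfil, telesc (fun m => Gm f m x) p p' hpp']

lemma D_mono (f : Fin n → ℝ → ℝ) (hf : BRMHyp f) {x y : ℝ}
    (hx : x ∈ Set.Icc (0:ℝ) 1) (hy : y ∈ Set.Icc (0:ℝ) 1) (hxy : x ≤ y)
    {m : ℕ} (hm1 : 1 ≤ m) (hmn : m < n) :
    Gm f (m-1) x - Gm f m x ≤ Gm f (m-1) y - Gm f m y := by
  have hmn' : m - 1 < n := by omega
  have e1 := Gm_sub f hf hmn' hx hy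
  have e2 := Gm_sub f hf hmn hx hy
  have hle : (∫ t in x..y, f ⟨m, hmn⟩ t) ≤ ∫ t in x..y, f ⟨m-1, hmn'⟩ t := by
    refine intervalIntegral.integral_mono_on hxy
      (integrable_sub _ (hf.1 _) hx hy) (integrable_sub _ (hf.1 _) hx hy) ?_
    intro t ht
    refine hf.2.2.1 ⟨m-1, hmn'⟩ ⟨m, hmn⟩ (by simp only [Fin.le_def]; omega) t
      ⟨le_trans hx.1 ht.1, le_trans ht.2 hy.2⟩
  linarith

lemma reward_le (f : Fin n → ℝ → ℝ) (hf : BRMHyp f) (τ τ' : Fin n → ℝ)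
    (hτa : ∀ j k : Fin n, j ≤ k → τ k ≤ τ j)
    (hτr : ∀ k, τ k ∈ Set.Icc (0:ℝ) 1) (hτ'r : ∀ k, τ' k ∈ Set.Icc (0:ℝ) 1)
    (hle : ∀ k, τ k ≤ τ' k)
    (p p' : ℕ) (hp : p < n) (hp' : p' < n) (hpp' : p ≤ p')
    (hval : τ' ⟨p', hp'⟩ = τ ⟨p, hp⟩) :
    brmRankedN f τ' p' ≤ brmRankedN f τ p := by
  set s := τ ⟨p, hp⟩ with hs
  have hsmem : s ∈ Set.Icc (0:ℝ) 1 := hτr _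
  rw [brm_formula f hf τ hτr (n-p) p le_rfl,
    brm_formula f hf τ' hτ'r (n-p') p' le_rfl]
  have hGp : tv τ p = s := dif_pos hp
  have hGp' : tv τ' p' = s := by rw [tv, dif_pos hp', hval]
  rw [hGp, hGp']
  have hc := G_sub_telescope f s p p' hpp' hp'
  have hterm : ∀ m ∈ Finset.range n,
      (if p < m then Gm f (m-1) (tv τ m) - Gm f m (tv τ m) else 0)
        ≤ (if p < m ∧ m ≤ p' then Gm f (m-1) s - Gm f m s else 0)
          + (if p' < m then Gm f (m-1) (tv τ' m) - Gm f m (tv τ' m) else 0) := by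
    intro m hm
    rw [Finset.mem_range] at hm
    by_cases hpm : p < m
    · have h1m : 1 ≤ m := by omega
      by_cases hp'm : p' < m
      · rw [if_pos hpm, if_neg (by omega), if_pos hp'm]
        have htvle : tv τ m ≤ tv τ' m := by
          rw [tv, tv, dif_pos hm, dif_pos hm]; exact hle _
        have := D_mono f hf (tv_mem τ hτr m) (tv_mem τ' hτ'r m) htvle h1m hm
        linarith
      · rw [if_pos hpm, if_pos ⟨hpm, by omega⟩, if_neg hp'm]
        have htvle : tv τ m ≤ s := by
          rw [tv, dif_pos hm]
          exact hτa ⟨p, hp⟩ ⟨m, hm⟩ (by simp only [Fin.le_def]; omega)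
        have := D_mono f hf (tv_mem τ hτr m) hsmem htvle h1m hm
        linarith
    · rw [if_neg hpm, if_neg (by tauto), if_neg (by omega)]
      simp
  have hsum := Finset.sum_le_sum hterm
  rw [Finset.sum_add_distrib, hc] at hsum
  linarith

end Stmt6Aux

/-- Every Backward Rewarding Mechanism is merit-based: normality,
fairness (with the explicit difference formula), and negative externality all hold. -/
theorem stmt6 {n : ℕ} (f : Fin n → ℝ → ℝ) (hf : BRMHyp f) :
    -- Normality: a creator with score 0 receives reward 0
    (∀ σ, SortedScores n σ → ∀ i, σ i = 0 → brmRanked f σ i = 0) ∧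
    -- Normality: a single creator with score 1 against all-zero competitors
    -- receives ∫₀¹ f₁(t) dt > 0
    (∀ i : Fin n, (i : ℕ) = 0 →
        brmRanked f (onesVec n 1) i = (∫ t in (0:ℝ)..1, f i t) ∧
        0 < brmRanked f (onesVec n 1) i) ∧
    -- Fairness: for i < j the reward difference is ∑_{k=i}^{j-1} ∫_{σ_{k+1}}^{σ_k} f_k ≥ 0
    (∀ σ, SortedScores n σ → ∀ i j : Fin n, i ≤ j →
        brmRanked f σ i - brmRanked f σ j =
          (∑ k : Fin n, if i ≤ k ∧ k < j then ∫ t in (nextVal σ k)..(σ k), f k t else 0) ∧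
        0 ≤ brmRanked f σ i - brmRanked f σ j) ∧
    -- Negative externality: increasing the others' scores weakly decreases i's reward
    (∀ σ σ' : Fin n → ℝ, (∀ j, σ j ∈ Set.Icc (0:ℝ) 1) → (∀ j, σ' j ∈ Set.Icc (0:ℝ) 1) →
        ∀ i, σ' i = σ i → (∀ j, j ≠ i → σ j ≤ σ' j) →
        brmRewardAt f σ' i ≤ brmRewardAt f σ i) := by
  refine ⟨?_, ?_, ?_, ?_⟩
  · -- Normality, zero score
    intro σ hσ i hi0
    rw [brmRanked, brmRankedN]
    refine Finset.sum_eq_zero fun k _ => ?_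
    split_ifs with h
    · have hik : i ≤ k := Fin.le_def.2 h
      have hk0 : σ k = 0 := by
        have h1 := hσ.1 i k hik
        have h2 := (hσ.2 k).1
        rw [hi0] at h1
        linarith
      have hnv : nextVal σ k = 0 := by
        rw [nextVal]
        split
        · next h2 =>
            have h3 := hσ.1 i ⟨(k:ℕ)+1, h2⟩ (by simp only [Fin.le_def]; omega)
            have h4 := (hσ.2 ⟨(k:ℕ)+1, h2⟩).1
            rw [hi0] at h3
            linarith
        · rfl
      rw [hk0, hnv, intervalIntegral.integral_same]
    · rfl
  · -- Normality, single winner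
    intro i hi
    have hsum : brmRanked f (onesVec n 1) i = ∫ t in (0:ℝ)..1, f i t := by
      rw [brmRanked, hi, brmRankedN]
      rw [Finset.sum_eq_single i]
      · have h1 : onesVec n 1 i = 1 := by rw [onesVec]; simp [hi]
        have h2 : nextVal (onesVec n 1) i = 0 := by
          rw [nextVal]
          split
          · rw [onesVec]; simp
          · rfl
        rw [if_pos (Nat.zero_le _), h1, h2]
      · intro k _ hk
        have hk1 : 1 ≤ (k:ℕ) := by
          rcases Nat.eq_zero_or_pos (k:ℕ) with h | h
          · exact absurd (Fin.ext (by omega)) hk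
          · exact h
        have h1 : onesVec n 1 k = 0 := by rw [onesVec]; simp; omega
        have h2 : nextVal (onesVec n 1) k = 0 := by
          rw [nextVal]
          split
          · rw [onesVec]; simp
          · rfl
        rw [if_pos (Nat.zero_le _), h1, h2, intervalIntegral.integral_same]
      · intro h
        exact absurd (Finset.mem_univ i) h
    refine ⟨hsum, ?_⟩
    rw [hsum]
    exact intervalIntegral.intervalIntegral_pos_of_pos_on (hf.1 i)
      (fun t ht => hf.2.2.2 i hi t ⟨le_of_lt ht.1, le_of_lt ht.2⟩) one_pos
  · -- Fairness
    intro σ hσ i j hij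
    have hij' : (i:ℕ) ≤ (j:ℕ) := hij
    have hmain : brmRanked f σ i - brmRanked f σ j
        = ∑ k : Fin n, if i ≤ k ∧ k < j then ∫ t in (nextVal σ k)..(σ k), f k t else 0 := by
      rw [brmRanked, brmRanked, brmRankedN, brmRankedN, ← Finset.sum_sub_distrib]
      refine Finset.sum_congr rfl fun k _ => ?_
      simp only [Fin.le_def, Fin.lt_def]
      split_ifs <;> first | omega | ring
    refine ⟨hmain, ?_⟩
    rw [hmain]
    refine Finset.sum_nonneg fun k _ => ?_
    split_ifs with h
    · have hnvm : nextVal σ k ∈ Set.Icc (0:ℝ) 1 := by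
        rw [nextVal]
        split
        · exact hσ.2 _
        · norm_num
      have hnvle : nextVal σ k ≤ σ k := by
        rw [nextVal]
        split
        · next h2 => exact hσ.1 k ⟨(k:ℕ)+1, h2⟩ (by simp only [Fin.le_def]; omega)
        · exact (hσ.2 k).1
      exact Stmt6Aux.int_nonneg (f k) (hf.2.1 k) hnvm (hσ.2 k) hnvle
    · exact le_rfl
  · -- Negative externality
    intro σ σ' hσr hσ'r i hii hoth
    have hle : ∀ j, σ j ≤ σ' j := by
      intro j
      by_cases h : j = i
      · subst h; rw [hii]
      · exact hoth j h
    rw [brmRewardAt, brmRewardAt]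
    refine Stmt6Aux.reward_le f hf (sortDesc σ) (sortDesc σ')
      (fun j k hjk => Stmt6Aux.sortDesc_antitone σ hjk)
      (Stmt6Aux.sortDesc_mem σ hσr) (Stmt6Aux.sortDesc_mem σ' hσ'r)
      (fun k => Stmt6Aux.sortDesc_mono hle k)
      (rankCount σ i) (rankCount σ' i)
      (Stmt6Aux.rankCount_lt σ i) (Stmt6Aux.rankCount_lt σ' i)
      (Stmt6Aux.rankCount_mono σ σ' i hii hle) ?_
    rw [Stmt6Aux.sortDesc_rankCount σ' i, Stmt6Aux.sortDesc_rankCount σ i, hii]
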